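/- Let g(ε,J) = ε⁵·log(J)/(496.1·J⁵·cosh⁵(Jε/2 + 0.1475)) on the domain 0 ≤ ε ≤ log 3, 1 ≤ J ≤ e^{1/5}. Then g is monotone increasing in ε: for fixed J in the domain and 0 ≤ ε₁ ≤ ε₂ ≤ log 3, g(ε₁,J) ≤ g(ε₂,J). (Key step: the factor cosh(x + 0.1475) − x·sinh(x + 0.1475) is positive for all x ∈ [0,1].) -/

import Mathlib

open Real

/-- g(ε,J) = ε⁵ log J / (496.1 J⁵ cosh⁵(Jε/2 + 0.1475)) -/
noncomputable def gEJ (ε J : ℝ) : ℝ :=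
  ε ^ 5 * Real.log J / (496.1 * J ^ 5 * (Real.cosh (J * ε / 2 + 0.1475)) ^ 5)

lemma key_pos (x : ℝ) (hx0 : 0 ≤ x) (hx1 : x ≤ 1) :
    0 < Real.cosh (x + 0.1475) - x * Real.sinh (x + 0.1475) := by
  have hs : 0 ≤ Real.sinh (x + 0.1475) := Real.sinh_nonneg_iff.2 (by linarith)
  have hcs := Real.cosh_sub_sinh (x + 0.1475)
  have he := Real.exp_pos (-(x + 0.1475))
  nlinarith

lemma exp_fifth_le : Real.exp (1/5 : ℝ) ≤ 5/4 := by
  have h1 : (4/5 : ℝ) ≤ Real.exp (-(1/5)) := by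
    have := Real.add_one_le_exp (-(1/5) : ℝ); linarith
  have h2 : Real.exp (1/5 : ℝ) * Real.exp (-(1/5)) = 1 := by
    rw [← Real.exp_add]; norm_num
  nlinarith [Real.exp_pos (1/5 : ℝ)]

lemma log_three_le : Real.log 3 ≤ 6/5 := by
  rw [Real.log_le_iff_le_exp (by norm_num)]
  have h1 : Real.exp (6/5 : ℝ) = Real.exp 1 * Real.exp (1/5) := by
    rw [← Real.exp_add]; norm_num
  have h2 := Real.exp_one_gt_d9
  have h3 : (1/5:ℝ) + 1 ≤ Real.exp (1/5) := Real.add_one_le_exp _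
  nlinarith

lemma f_mono (J : ℝ) (hJ1 : 1 ≤ J) (hJ2 : J ≤ Real.exp (1/5)) :
    MonotoneOn (fun ε => ε / Real.cosh (J * ε / 2 + 0.1475))
      (Set.Icc 0 (Real.log 3)) := by
  have hJ : J ≤ 5/4 := hJ2.trans exp_fifth_le
  have hderiv : ∀ ε : ℝ, HasDerivAt (fun ε => ε / Real.cosh (J * ε / 2 + 0.1475))
      ((1 * Real.cosh (J * ε / 2 + 0.1475) -
        ε * (Real.sinh (J * ε / 2 + 0.1475) * (J * 1 / 2))) /
        Real.cosh (J * ε / 2 + 0.1475) ^ 2) ε := by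
    intro ε
    have hinner : HasDerivAt (fun ε : ℝ => J * ε / 2 + 0.1475) (J * 1 / 2) ε :=
      (((hasDerivAt_id ε).const_mul J).div_const 2).add_const _
    exact (hasDerivAt_id ε).div
      ((Real.hasDerivAt_cosh _).comp ε hinner)
      (Real.cosh_pos _).ne'
  apply monotoneOn_of_deriv_nonneg (convex_Icc _ _)
  · exact fun ε _ => ((hderiv ε).continuousAt).continuousWithinAt
  · exact fun ε _ => ((hderiv ε).differentiableAt).differentiableWithinAt
  · intro ε hε
    rw [interior_Icc, Set.mem_Ioo] at hε
    rw [(hderiv ε).deriv]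
    set x := J * ε / 2 with hx
    have hε2 : ε ≤ 6/5 := hε.2.le.trans log_three_le
    have hx0 : 0 ≤ x := by rw [hx]; nlinarith [hε.1]
    have hx1 : x ≤ 1 := by rw [hx]; nlinarith
    have hnum : 0 < Real.cosh (x + 0.1475) - x * Real.sinh (x + 0.1475) :=
      key_pos x hx0 hx1
    have hc := Real.cosh_pos (x + 0.1475)
    have heq : ε * (Real.sinh (x + 0.1475) * (J * 1 / 2)) =
        x * Real.sinh (x + 0.1475) := by rw [hx]; ring
    apply div_nonneg _ (by positivity)
    rw [heq]; linarith

theorem gEJ_mono_in_eps :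
    (∀ J ε₁ ε₂ : ℝ, 1 ≤ J → J ≤ Real.exp (1 / 5) →
      0 ≤ ε₁ → ε₁ ≤ ε₂ → ε₂ ≤ Real.log 3 → gEJ ε₁ J ≤ gEJ ε₂ J) ∧
    (∀ x : ℝ, 0 ≤ x → x ≤ 1 →
      0 < Real.cosh (x + 0.1475) - x * Real.sinh (x + 0.1475)) := by
  constructor
  · intro J ε₁ ε₂ hJ1 hJ2 h0 h12 h2
    have hlog3 : 0 ≤ Real.log 3 := Real.log_nonneg (by norm_num)
    have hm := f_mono J hJ1 hJ2
      (Set.mem_Icc.2 ⟨h0, h12.trans h2⟩) (Set.mem_Icc.2 ⟨h0.trans h12, h2⟩) h12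
    simp only at hm
    have hf1 : 0 ≤ ε₁ / Real.cosh (J * ε₁ / 2 + 0.1475) :=
      div_nonneg h0 (Real.cosh_pos _).le
    have hpow : (ε₁ / Real.cosh (J * ε₁ / 2 + 0.1475)) ^ 5 ≤
        (ε₂ / Real.cosh (J * ε₂ / 2 + 0.1475)) ^ 5 :=
      pow_le_pow_left₀ hf1 hm 5
    have hC : 0 ≤ Real.log J / (496.1 * J ^ 5) := by
      apply div_nonneg (Real.log_nonneg hJ1)
      positivity
    have hrw : ∀ ε : ℝ, gEJ ε J =
        Real.log J / (496.1 * J ^ 5) * (ε / Real.cosh (J * ε / 2 + 0.1475)) ^ 5 := by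
      intro ε
      have hc := (Real.cosh_pos (x := J * ε / 2 + 0.1475)).ne'
      have hJ0 : J ≠ 0 := by positivity
      unfold gEJ
      field_simp
    rw [hrw ε₁, hrw ε₂]
    exact mul_le_mul_of_nonneg_left hpow hC
  · exact key_pos
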